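/- In the infinitesimal Hopf algebra of planar forests, the intersection Ker(Δ̃) ∩ Ker(Δ̃_↗) of the primitives for the left-admissible-cut coproduct and the primitives for the deconcatenation coproduct is exactly the one-dimensional span of the single-vertex tree •. -/

import Mathlib

open scoped TensorProduct

/-- Planar rooted trees; `PTree.node []` is the single-vertex tree `•`. -/
inductive PTree : Type
  | node : List PTree → PTree

/-- Planar rooted forests. -/
abbrev Forest : Type := List PTree

instance : Monoid Forest where
  mul := fun x y => List.append x y
  one := ([] : List PTree)
  mul_assoc := List.append_assoc
  one_mul := fun _ => rfl
  mul_one := List.append_nil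

/-- The infinitesimal Hopf algebra `H` of planar rooted forests. -/
abbrev H : Type := MonoidAlgebra ℚ Forest

/-- The basis element of `H` indexed by a forest. -/
noncomputable def bf (F : Forest) : H := MonoidAlgebra.of ℚ Forest F

/-- The operator `B⁺` grafting a forest on a common new root, extended linearly. -/
noncomputable def Bplus : H →ₗ[ℚ] H :=
  (Finsupp.lift H ℚ Forest fun F => bf [PTree.node F]) ∘ₗ
    (MonoidAlgebra.coeffLinearEquiv ℚ).toLinearMap

/-- The deconcatenation coproduct `Δ_↗(F) = Σ_{F_1·F_2 = F} F_1 ⊗ F_2`. -/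
noncomputable def Δd : H →ₗ[ℚ] H ⊗[ℚ] H :=
  (Finsupp.lift (H ⊗[ℚ] H) ℚ Forest fun F =>
    ∑ k ∈ Finset.range (F.length + 1), bf (F.take k) ⊗ₜ bf (F.drop k)) ∘ₗ
    (MonoidAlgebra.coeffLinearEquiv ℚ).toLinearMap

/- ### Auxiliary definitions and lemmas -/

attribute [local instance] Classical.propDecidable

lemma lift_single (g : Forest → H) (F : Forest) (c : ℚ) :
    Finsupp.lift H ℚ Forest g (Finsupp.single F c) = c • g F := by
  simp [Finsupp.lift_apply, Finsupp.sum_single_index]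

lemma lift_single' (g : Forest → H ⊗[ℚ] H) (F : Forest) (c : ℚ) :
    Finsupp.lift (H ⊗[ℚ] H) ℚ Forest g (Finsupp.single F c) = c • g F := by
  simp [Finsupp.lift_apply, Finsupp.sum_single_index]

lemma bf_def (F : Forest) : bf F = MonoidAlgebra.single F 1 := rfl

lemma bf_nil : bf [] = (1 : H) := rfl

lemma one_def : (1 : H) = MonoidAlgebra.single ([] : Forest) 1 := rfl

lemma mul_def (F G : Forest) : F * G = F ++ G := rfl

lemma bf_mul (F G : Forest) : bf F * bf G = bf (F ++ G) := by
  rw [bf, bf, bf, ← map_mul]; rfl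

lemma Bplus_single (F : Forest) (c : ℚ) :
    Bplus (MonoidAlgebra.single F c) = MonoidAlgebra.single [PTree.node F] c := by
  have h : Bplus (MonoidAlgebra.single F c) = c • bf [PTree.node F] := lift_single _ F c
  rw [h, bf_def, MonoidAlgebra.smul_single', mul_one]

lemma Bplus_bf (F : Forest) : Bplus (bf F) = bf [PTree.node F] := Bplus_single F 1

lemma Bplus_one : Bplus 1 = bf [PTree.node []] := Bplus_single [] 1

/-- The counit: coefficient of the empty forest. -/
noncomputable def eps : H →ₗ[ℚ] ℚ := Finsupp.lapply ([] : Forest) ∘ₗ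
    (MonoidAlgebra.coeffLinearEquiv ℚ).toLinearMap

lemma one_apply_nil : (1 : H).coeff ([] : Forest) = 1 := by
  rw [one_def]; exact Finsupp.single_eq_same

lemma one_apply_cons (a : PTree) (l : List PTree) : (1 : H).coeff (a :: l) = 0 := by
  rw [one_def]; exact Finsupp.single_eq_of_ne' (by simp)

lemma eps_single (F : Forest) (c : ℚ) :
    eps (MonoidAlgebra.single F c) = if F = [] then c else 0 := by
  have h : eps (MonoidAlgebra.single F c) = (Finsupp.single F c : Forest →₀ ℚ) [] := rfl
  rw [h, Finsupp.single_apply]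

lemma eps_one : eps 1 = 1 := by rw [one_def, eps_single]; simp

lemma eps_mul (a b : H) : eps (a * b) = eps a * eps b := by
  induction a using MonoidAlgebra.induction_linear with
  | zero => simp
  | add f g hf hg => simp [add_mul, hf, hg]
  | single F c =>
    induction b using MonoidAlgebra.induction_linear with
    | zero => simp
    | add f g hf hg => simp [mul_add, hf, hg]
    | single G d =>
      rw [MonoidAlgebra.single_mul_single, eps_single, eps_single, eps_single, mul_def]
      rcases F with _ | ⟨t, F⟩ <;> rcases G with _ | ⟨s, G⟩ <;> simp

lemma eps_Bplus (z : H) : eps (Bplus z) = 0 := by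
  induction z using MonoidAlgebra.induction_linear with
  | zero => simp
  | add f g hf hg => simp [hf, hg]
  | single F c => rw [Bplus_single, eps_single]; simp

/-- `φ = (id ⊗ eps)` composed with the scalar action. -/
noncomputable def phi : H ⊗[ℚ] H →ₗ[ℚ] H :=
  TensorProduct.lift (((LinearMap.lsmul ℚ H).flip).compl₂ eps)

lemma phi_tmul (a b : H) : phi (a ⊗ₜ b) = eps b • a := rfl

lemma phi_mul_left (x : H) (T : H ⊗[ℚ] H) : phi ((x ⊗ₜ (1 : H)) * T) = x * phi T := by
  induction T with
  | zero => simp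
  | tmul a b => rw [Algebra.TensorProduct.tmul_mul_tmul, one_mul, phi_tmul, phi_tmul,
      mul_smul_comm]
  | add T₁ T₂ h₁ h₂ => rw [mul_add, map_add, h₁, h₂, map_add, mul_add]

lemma phi_mul_right (y : H) (T : H ⊗[ℚ] H) : phi (T * ((1 : H) ⊗ₜ y)) = eps y • phi T := by
  induction T with
  | zero => simp
  | tmul a b => rw [Algebra.TensorProduct.tmul_mul_tmul, mul_one, phi_tmul, phi_tmul,
      eps_mul, mul_comm, mul_smul]
  | add T₁ T₂ h₁ h₂ => rw [add_mul, map_add, h₁, h₂, map_add, smul_add]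

lemma phi_lTensor_Bplus (T : H ⊗[ℚ] H) : phi ((LinearMap.lTensor H Bplus) T) = 0 := by
  induction T with
  | zero => simp
  | tmul a b => rw [LinearMap.lTensor_tmul, phi_tmul, eps_Bplus, zero_smul]
  | add T₁ T₂ h₁ h₂ => rw [map_add, map_add, h₁, h₂, add_zero]

section Counit
variable (Δ : H →ₗ[ℚ] H ⊗[ℚ] H)
    (hΔ1 : Δ 1 = 1 ⊗ₜ 1)
    (hΔm : ∀ x y : H, Δ (x * y) = (x ⊗ₜ (1 : H)) * Δ y + Δ x * ((1 : H) ⊗ₜ y) - x ⊗ₜ y)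
    (hΔB : ∀ x : H, Δ (Bplus x) = (Bplus x) ⊗ₜ 1 + (LinearMap.lTensor H Bplus) (Δ x))

include hΔB in
lemma counit_Bplus (z : H) : phi (Δ (Bplus z)) = Bplus z := by
  rw [hΔB, map_add, phi_tmul, phi_lTensor_Bplus, add_zero, eps_one, one_smul]

include hΔ1 hΔm hΔB in
lemma counit_bf (F : Forest) : phi (Δ (bf F)) = bf F := by
  induction F with
  | nil => rw [bf_nil, hΔ1, phi_tmul, eps_one, one_smul]
  | cons t F ih =>
    obtain ⟨L⟩ := t
    have h1 : bf (PTree.node L :: F) = bf [PTree.node L] * bf F := by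
      rw [bf_mul, List.singleton_append]
    rw [h1, hΔm, map_sub, map_add, phi_mul_left, phi_mul_right, phi_tmul, ih,
      ← Bplus_bf, counit_Bplus Δ hΔB, add_sub_cancel_right]

include hΔ1 hΔm hΔB in
lemma counit (x : H) : phi (Δ x) = x := by
  induction x using MonoidAlgebra.induction_linear with
  | zero => simp
  | add f g hf hg => rw [map_add, map_add, hf, hg]
  | single F c =>
    have h : (MonoidAlgebra.single F c : H) = c • bf F := by
      rw [bf_def, MonoidAlgebra.smul_single', mul_one]
    rw [h, map_smul, map_smul, counit_bf Δ hΔ1 hΔm hΔB]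
end Counit

/-- Coefficient extraction on `H ⊗ H`. -/
noncomputable def lam (F₁ F₂ : Forest) : H ⊗[ℚ] H →ₗ[ℚ] ℚ :=
  TensorProduct.lift ((LinearMap.mul ℚ ℚ).compl₁₂
    (Finsupp.lapply F₁ ∘ₗ (MonoidAlgebra.coeffLinearEquiv ℚ).toLinearMap)
    (Finsupp.lapply F₂ ∘ₗ (MonoidAlgebra.coeffLinearEquiv ℚ).toLinearMap))

lemma lam_tmul (F₁ F₂ : Forest) (a b : H) : lam F₁ F₂ (a ⊗ₜ b) = a.coeff F₁ * b.coeff F₂ := rfl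

lemma take_drop_sum (F₁ F₂ F : Forest) :
    ∑ k ∈ Finset.range (F.length + 1),
      (if F.take k = F₁ then (1:ℚ) else 0) * (if F.drop k = F₂ then (1:ℚ) else 0) =
      if F = F₁ ++ F₂ then 1 else 0 := by
  have key : ∀ k, k ∈ Finset.range (F.length + 1) →
      ((F.take k = F₁ ∧ F.drop k = F₂) ↔ (k = F₁.length ∧ F = F₁ ++ F₂)) := by
    intro k hk
    rw [Finset.mem_range, Nat.lt_succ_iff] at hk
    constructor
    · rintro ⟨h1, h2⟩
      have hF : F = F₁ ++ F₂ := by rw [← h1, ← h2, List.take_append_drop]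
      have hl : k = F₁.length := by
        have := congrArg List.length h1
        rwa [List.length_take, min_eq_left hk] at this
      exact ⟨hl, hF⟩
    · rintro ⟨h1, h2⟩
      subst h1; subst h2
      exact ⟨List.take_left, List.drop_left⟩
  have hmem : F = F₁ ++ F₂ → F₁.length ∈ Finset.range (F.length + 1) := by
    intro hF
    rw [Finset.mem_range, Nat.lt_succ_iff, hF, List.length_append]; omega
  by_cases hF : F = F₁ ++ F₂
  · rw [if_pos hF, Finset.sum_eq_single F₁.length]
    · rw [if_pos ((key _ (hmem hF)).2 ⟨rfl, hF⟩).1, if_pos ((key _ (hmem hF)).2 ⟨rfl, hF⟩).2,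
        one_mul]
    · intro k hk hne
      by_cases h1 : F.take k = F₁
      · by_cases h2 : F.drop k = F₂
        · exact absurd ((key k hk).1 ⟨h1, h2⟩).1 hne
        · rw [if_neg h2, mul_zero]
      · rw [if_neg h1, zero_mul]
    · intro h
      exact absurd (hmem hF) h
  · rw [if_neg hF]
    apply Finset.sum_eq_zero
    intro k hk
    by_cases h1 : F.take k = F₁
    · by_cases h2 : F.drop k = F₂
      · exact absurd ((key k hk).1 ⟨h1, h2⟩).2 hF
      · rw [if_neg h2, mul_zero]
    · rw [if_neg h1, zero_mul]

lemma lam_Δd (F₁ F₂ : Forest) (x : H) : lam F₁ F₂ (Δd x) = x.coeff (F₁ ++ F₂) := by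
  induction x using MonoidAlgebra.induction_linear with
  | zero => simp
  | add f g hf hg => rw [map_add, map_add, MonoidAlgebra.coeff_add, Finsupp.add_apply, hf, hg]
  | single F c =>
    have hD : Δd (MonoidAlgebra.single F c) =
        c • ∑ k ∈ Finset.range (F.length + 1), bf (F.take k) ⊗ₜ bf (F.drop k) :=
      lift_single' _ F c
    rw [hD, map_smul, map_sum]
    have h : ∀ k, lam F₁ F₂ (bf (F.take k) ⊗ₜ bf (F.drop k)) =
        (if F.take k = F₁ then (1:ℚ) else 0) * (if F.drop k = F₂ then (1:ℚ) else 0) := by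
      intro k
      rw [lam_tmul, bf_def, bf_def, MonoidAlgebra.coeff_single, MonoidAlgebra.coeff_single,
          Finsupp.single_apply, Finsupp.single_apply]
    simp_rw [h]
    rw [take_drop_sum, MonoidAlgebra.coeff_single, Finsupp.single_apply]
    by_cases hF : F = F₁ ++ F₂ <;> simp [hF]

/-- A linear partial inverse of `Bplus`. -/
noncomputable def U : H →ₗ[ℚ] H :=
  (Finsupp.lift H ℚ Forest fun F =>
    match F with
    | [PTree.node L] => bf L
    | _ => 0) ∘ₗ (MonoidAlgebra.coeffLinearEquiv ℚ).toLinearMap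

lemma U_single_tree (L : Forest) (c : ℚ) :
    U (MonoidAlgebra.single [PTree.node L] c) = c • bf L :=
  lift_single _ [PTree.node L] c

lemma Bplus_eq_mapDomain (z : H) :
    Bplus z = MonoidAlgebra.mapDomain (fun F : Forest => [PTree.node F]) z := by
  induction z using MonoidAlgebra.induction_linear with
  | zero => simp
  | add f g hf hg => rw [map_add, MonoidAlgebra.mapDomain_add, hf, hg]
  | single F c => rw [Bplus_single, MonoidAlgebra.mapDomain_single]

lemma Bplus_injective : Function.Injective Bplus := by
  intro a b hab
  rw [Bplus_eq_mapDomain, Bplus_eq_mapDomain] at hab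
  exact MonoidAlgebra.mapDomain_injective (fun a b h => by simpa using h) hab

lemma Bplus_U (x : H) (hs : ∀ F ∈ x.coeff.support, F.length = 1) : Bplus (U x) = x := by
  have h1 : Bplus (U x) = x.coeff.sum fun F c => Bplus (U (MonoidAlgebra.single F c)) := by
    conv_lhs => rw [← MonoidAlgebra.sum_coeff_single x]
    rw [map_finsuppSum, map_finsuppSum]
  rw [h1]
  have h2 : (x.coeff.sum fun F c => Bplus (U (MonoidAlgebra.single F c))) =
      x.coeff.sum MonoidAlgebra.single := by
    apply Finsupp.sum_congr
    intro F hF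
    rcases F with _ | ⟨⟨L⟩, _ | ⟨s, rest⟩⟩
    · simp at hs; exact absurd (hs [] (by simpa using hF)) (by simp)
    · rw [U_single_tree, map_smul, Bplus_bf, bf_def, MonoidAlgebra.smul_single', mul_one]
    · exact absurd (hs _ hF) (by simp)
  rw [h2, MonoidAlgebra.sum_coeff_single]

lemma Δd_dot : Δd (bf [PTree.node []]) =
    bf [PTree.node []] ⊗ₜ 1 + 1 ⊗ₜ bf [PTree.node []] := by
  have h : Δd (MonoidAlgebra.single ([PTree.node []] : Forest) (1:ℚ)) = (1:ℚ) •
      ∑ k ∈ Finset.range (([PTree.node []] : Forest).length + 1),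
        bf (([PTree.node []] : Forest).take k) ⊗ₜ bf (([PTree.node []] : Forest).drop k) :=
    lift_single' _ _ 1
  rw [bf_def, h, one_smul]
  rw [show ([PTree.node []] : Forest).length + 1 = 2 from rfl,
    Finset.sum_range_succ, Finset.sum_range_succ, Finset.sum_range_zero, zero_add]
  simp only [List.take_zero, List.drop_zero, List.take_succ_cons, List.take_nil,
    List.drop_succ_cons, List.drop_nil]
  rw [bf_nil, bf_def, add_comm]

/-- For the left-admissible-cut coproduct `Δ` of `H`, an element is primitive for both
`Δ` and the deconcatenation coproduct `Δ_↗` if and only if it is a scalar multiple of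
the single-vertex tree `•`: `Ker(Δ̃) ∩ Ker(Δ̃_↗) = K·•`. -/
theorem primitives_intersection (Δ : H →ₗ[ℚ] H ⊗[ℚ] H)
    (hΔ1 : Δ 1 = 1 ⊗ₜ 1)
    (hΔm : ∀ x y : H, Δ (x * y) = (x ⊗ₜ (1 : H)) * Δ y + Δ x * ((1 : H) ⊗ₜ y) - x ⊗ₜ y)
    (hΔB : ∀ x : H, Δ (Bplus x) = (Bplus x) ⊗ₜ 1 + (LinearMap.lTensor H Bplus) (Δ x)) :
    ∀ x : H,
      (Δ x = x ⊗ₜ 1 + 1 ⊗ₜ x ∧ Δd x = x ⊗ₜ 1 + 1 ⊗ₜ x) ↔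
        ∃ c : ℚ, x = c • bf [PTree.node []] := by
  intro x
  constructor
  · rintro ⟨h1, h2⟩
    have hkey : ∀ F₁ F₂ : Forest, x.coeff (F₁ ++ F₂) = x.coeff F₁ * (1:H).coeff F₂ + (1:H).coeff F₁ * x.coeff F₂ := by
      intro F₁ F₂
      have hh := lam_Δd F₁ F₂ x
      rw [h2] at hh
      rw [← hh, map_add, lam_tmul, lam_tmul]
    have h0 : x.coeff [] = 0 := by
      have hh := hkey [] []
      rw [one_apply_nil, mul_one, one_mul, List.nil_append] at hh
      linarith
    have hlong : ∀ a b rest, x.coeff (a :: b :: rest) = 0 := by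
      intro a b rest
      have hh := hkey [a] (b :: rest)
      rw [one_apply_cons, one_apply_cons, mul_zero, zero_mul, add_zero] at hh
      rwa [List.singleton_append] at hh
    have hs : ∀ F ∈ x.coeff.support, F.length = 1 := by
      intro F hF
      rcases F with _ | ⟨a, _ | ⟨b, rest⟩⟩
      · exact absurd h0 (Finsupp.mem_support_iff.1 hF)
      · rfl
      · exact absurd (hlong a b rest) (Finsupp.mem_support_iff.1 hF)
    have hx : Bplus (U x) = x := Bplus_U x hs
    have hΔU : Δ (U x) = 1 ⊗ₜ U x := by
      apply Module.Flat.lTensor_preserves_injective_linearMap (M := H) Bplus Bplus_injective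
      have hB := hΔB (U x)
      rw [hx, h1] at hB
      have hc : (LinearMap.lTensor H Bplus) (Δ (U x)) = 1 ⊗ₜ x := (add_left_cancel hB).symm
      rw [hc, LinearMap.lTensor_tmul, hx]
    have hUx : U x = eps (U x) • 1 := by
      have h := counit Δ hΔ1 hΔm hΔB (U x)
      rw [hΔU, phi_tmul] at h
      exact h.symm
    refine ⟨eps (U x), ?_⟩
    calc x = Bplus (U x) := hx.symm
      _ = Bplus (eps (U x) • 1) := by rw [← hUx]
      _ = eps (U x) • bf [PTree.node []] := by rw [map_smul, Bplus_one]
  · rintro ⟨c, rfl⟩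
    constructor
    · rw [map_smul, ← Bplus_one, hΔB, hΔ1, LinearMap.lTensor_tmul]
      simp [TensorProduct.smul_tmul', TensorProduct.tmul_smul, smul_add]
    · rw [map_smul, Δd_dot]
      simp [TensorProduct.smul_tmul', TensorProduct.tmul_smul, smul_add]
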